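/- For any x, v ∈ ℝ^N with 0 ≤ xᵢ ≤ 1 for all i and ‖2v - 1‖₂² ≤ N, one has ⟨2x - 1, 2v - 1⟩ ≤ N, with equality if and only if x ∈ {0,1}^N and x = v. -/
import Mathlib


theorem stmt_1 (N : ℕ) (x v : Fin N → ℝ)
    (hx : ∀ i, 0 ≤ x i ∧ x i ≤ 1)
    (hv : ∑ i, (2 * v i - 1) ^ 2 ≤ (N : ℝ)) :
    ∑ i, (2 * x i - 1) * (2 * v i - 1) ≤ (N : ℝ) ∧
    (∑ i, (2 * x i - 1) * (2 * v i - 1) = (N : ℝ) ↔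
      (∀ i, x i = 0 ∨ x i = 1) ∧ x = v) := by
  have key : ∀ i ∈ Finset.univ, (2 * x i - 1) * (2 * v i - 1) ≤ (1 + (2 * v i - 1) ^ 2) / 2 := by
    intro i _
    have h := hx i
    nlinarith [sq_nonneg ((2 * x i - 1) - (2 * v i - 1)), sq_nonneg (2 * x i - 1)]
  have hsum : ∑ i, (2 * x i - 1) * (2 * v i - 1) ≤ ∑ i, (1 + (2 * v i - 1) ^ 2) / 2 :=
    Finset.sum_le_sum key
  have hmid : ∑ i, (1 + (2 * v i - 1) ^ 2) / 2 = ((N : ℝ) + ∑ i, (2 * v i - 1) ^ 2) / 2 := by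
    rw [← Finset.sum_div, Finset.sum_add_distrib, Finset.sum_const, Finset.card_univ,
      Fintype.card_fin, nsmul_eq_mul, mul_one]
  have hle : ∑ i, (2 * x i - 1) * (2 * v i - 1) ≤ (N : ℝ) := by
    rw [hmid] at hsum; linarith
  refine ⟨hle, ⟨?_, ?_⟩⟩
  · intro heq
    have hg : ∑ i, (1 + (2 * v i - 1) ^ 2) / 2 = (N : ℝ) := by
      rw [hmid]; rw [hmid] at hsum; linarith
    have hpt : ∀ i ∈ Finset.univ, (2 * x i - 1) * (2 * v i - 1) = (1 + (2 * v i - 1) ^ 2) / 2 :=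
      (Finset.sum_eq_sum_iff_of_le key).1 (by rw [heq, hg])
    have hxv : x = v := by
      funext i
      have h := hx i
      have hp := hpt i (Finset.mem_univ i)
      nlinarith [sq_nonneg ((2 * x i - 1) - (2 * v i - 1))]
    refine ⟨?_, hxv⟩
    intro i
    have hp := hpt i (Finset.mem_univ i)
    rw [← hxv] at hp
    have : x i * (x i - 1) = 0 := by nlinarith
    rcases mul_eq_zero.1 this with h | h
    · exact Or.inl h
    · exact Or.inr (by linarith)
  · rintro ⟨hb, rfl⟩
    have : ∀ i ∈ Finset.univ, (2 * x i - 1) * (2 * x i - 1) = 1 := by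
      intro i _
      rcases hb i with h | h <;> rw [h] <;> ring
    rw [Finset.sum_congr rfl this, Finset.sum_const, Finset.card_univ, Fintype.card_fin,
      nsmul_eq_mul, mul_one]
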